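/- Let u, v : ℝⁿ → ℝ ∪ {+∞} be lower semicontinuous convex functions, not identically +∞, with u ∧ v convex. Then for every x ∈ ℝⁿ, ∂(u ∨ v)(x) ∪ ∂(u ∧ v)(x) = ∂u(x) ∪ ∂v(x) and ∂(u ∨ v)(x) ∩ ∂(u ∧ v)(x) = ∂u(x) ∩ ∂v(x). -/

import Mathlib

open Filter Topology MeasureTheory
open scoped RealInnerProductSpace ENNReal Classical

noncomputable section

/-- Euclidean space ℝⁿ. -/
abbrev En (n : ℕ) := EuclideanSpace ℝ (Fin n)

/-- Convexity of an `EReal`-valued function, via convexity of its epigraph. -/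
def ConvexFn {n : ℕ} (u : En n → EReal) : Prop :=
  Convex ℝ {p : En n × ℝ | u p.1 ≤ (p.2 : EReal)}

/-- The subdifferential of `u` at `x`. -/
def subdiff {n : ℕ} (u : En n → EReal) (x : En n) : Set (En n) :=
  {y | ∀ z, u x + (⟪z - x, y⟫ : EReal) ≤ u z}

/-- The convex (Legendre–Fenchel) conjugate of `u`. -/
def conj {n : ℕ} (u : En n → EReal) (y : En n) : EReal :=
  ⨆ x, ((⟪x, y⟫ : EReal) - u x)

/-- Graph of the subdifferential map. -/
def sgraph {n : ℕ} (u : En n → EReal) : Set (En n × En n) :=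
  {p | p.2 ∈ subdiff u p.1}

/-- Parallel set `P_s(u, η)`. -/
def parallelSet {n : ℕ} (u : En n → EReal) (η : Set (En n × En n)) (s : ℝ) : Set (En n) :=
  {z | ∃ p ∈ η, p.2 ∈ subdiff u p.1 ∧ z = p.1 + s • p.2}

/-- Convex indicator function of a set. -/
def indFn {n : ℕ} (K : Set (En n)) (x : En n) : EReal :=
  if x ∈ K then 0 else ⊤

/-- Lipschitz regularization (Pasch–Hausdorff envelope) `reg_r u = (u* + I_{B_{1/r}})*`. -/
def regLip {n : ℕ} (u : En n → EReal) (r : ℝ) : En n → EReal :=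
  conj (fun y => conj u y + indFn (Metric.closedBall (0 : En n) (1 / r)) y)

namespace SubIE

variable {n : ℕ}

lemma exists_real_le_lt {x : EReal} {r : ℝ} (h : x < (r : EReal)) :
    ∃ b : ℝ, x ≤ (b : EReal) ∧ b < r := by
  induction x using EReal.rec with
  | bot => exact ⟨r - 1, bot_le, by linarith⟩
  | coe a => exact ⟨a, le_refl _, by exact_mod_cast h⟩
  | top => exact absurd h (by simp)

lemma exists_real_btwn {p : EReal} {a : ℝ} (h : (a : EReal) < p) :
    ∃ b : ℝ, a < b ∧ (b : EReal) < p := by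
  obtain ⟨m, h1, h2⟩ := exists_between h
  induction m using EReal.rec with
  | bot => exact absurd h1 (by simp)
  | coe b => exact ⟨b, by exact_mod_cast h1, h2⟩
  | top => exact absurd h2 (by simp)

lemma exists_real_gt (x : EReal) (h : x ≠ ⊤) : ∃ r : ℝ, x < (r : EReal) := by
  induction x using EReal.rec with
  | bot => exact ⟨0, by simp⟩
  | coe a => exact ⟨a + 1, by exact_mod_cast lt_add_one a⟩
  | top => exact absurd rfl h

lemma aff_comb (x y z₁ z₂ : En n) (c t : ℝ) :
    c + ⟪((1-t)•z₁ + t•z₂) - x, y⟫ = (1-t)*(c + ⟪z₁ - x, y⟫) + t*(c + ⟪z₂ - x, y⟫) := by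
  have h : ((1-t)•z₁ + t•z₂) - x = (1-t)•(z₁ - x) + t•(z₂ - x) := by
    module
  rw [h, inner_add_left, real_inner_smul_left, real_inner_smul_left]; ring

lemma chord {u v : En n → EReal} (hmin : ConvexFn (fun x => u x ⊓ v x))
    (z₁ z₂ : En n) (b₁ b₂ t : ℝ) (h1 : u z₁ ⊓ v z₁ ≤ (b₁ : EReal))
    (h2 : u z₂ ⊓ v z₂ ≤ (b₂ : EReal)) (ht0 : 0 ≤ t) (ht1 : t ≤ 1) :
    u ((1-t)•z₁ + t•z₂) ⊓ v ((1-t)•z₁ + t•z₂) ≤ (((1-t)*b₁ + t*b₂ : ℝ) : EReal) := by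
  have := hmin (x := (z₁, b₁)) (y := (z₂, b₂)) h1 h2 (a := 1-t) (b := t)
    (by linarith) ht0 (by ring)
  simpa [Prod.smul_mk, Prod.mk_add_mk, smul_eq_mul] using this

lemma inf_eq_right_of_lt {a b : EReal} {g : EReal} (h : a ⊓ b < g) (ha : g ≤ a) : a ⊓ b = b := by
  rcases le_total a b with h' | h'
  · exact absurd ((inf_eq_left.2 h') ▸ h) (not_lt.2 ha)
  · exact inf_eq_right.2 h'

/-- Core lemma: if `u ⊓ v` is convex and `max(u,v) ≥ A` for an affine `A`, then
`u ≥ A` everywhere or `v ≥ A` everywhere. (Stated as a contradiction.) -/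
lemma core {u v : En n → EReal}
    (hul : LowerSemicontinuous u) (hvl : LowerSemicontinuous v)
    (hmin : ConvexFn (fun x => u x ⊓ v x))
    (A : En n → ℝ)
    (hAaff : ∀ (p q : En n) (t : ℝ), A ((1-t)•p + t•q) = (1-t) * A p + t * A q)
    (hA : ∀ z, (A z : EReal) ≤ u z ⊔ v z)
    (z₁ z₂ : En n) (h₁ : u z₁ < (A z₁ : EReal)) (h₂ : v z₂ < (A z₂ : EReal)) : False := by
  classical
  set w : ℝ → En n := fun t => (1-t)•z₁ + t•z₂ with hwdef
  set g : ℝ → ℝ := fun t => (1-t) * A z₁ + t * A z₂ with hgdef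
  have hw0 : w 0 = z₁ := by simp [hwdef]
  have hw1 : w 1 = z₂ := by simp [hwdef]
  have hg0 : g 0 = A z₁ := by simp [hgdef]
  have hg1 : g 1 = A z₂ := by simp [hgdef]
  have hAw : ∀ t, A (w t) = g t := fun t => hAaff z₁ z₂ t
  have hnbw : ∀ t, v (w t) < (g t : EReal) → (g t : EReal) ≤ u (w t) := by
    intro t h
    by_contra hc
    have := hA (w t)
    rw [hAw t] at this
    exact absurd this (not_le.2 (sup_lt_iff.2 ⟨not_le.1 hc, h⟩))
  have hnbw' : ∀ t, u (w t) < (g t : EReal) → (g t : EReal) ≤ v (w t) := by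
    intro t h
    by_contra hc
    have := hA (w t)
    rw [hAw t] at this
    exact absurd this (not_le.2 (sup_lt_iff.2 ⟨h, not_le.1 hc⟩))
  have hu2 : (A z₂ : EReal) ≤ u z₂ := by
    by_contra hc
    exact absurd (hA z₂) (not_le.2 (sup_lt_iff.2 ⟨not_le.1 hc, h₂⟩))
  obtain ⟨b₁, hb₁m, hb₁⟩ := exists_real_le_lt (lt_of_le_of_lt inf_le_left h₁)
  obtain ⟨b₂, hb₂m, hb₂⟩ := exists_real_le_lt (lt_of_le_of_lt inf_le_right h₂)
  set δ : ℝ := min (A z₁ - b₁) (A z₂ - b₂) with hδdef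
  have hδ : 0 < δ := lt_min (by linarith) (by linarith)
  have hchord : ∀ t, 0 ≤ t → t ≤ 1 → u (w t) ⊓ v (w t) ≤ ((g t - δ : ℝ) : EReal) := by
    intro t ht0 ht1
    refine (chord hmin z₁ z₂ b₁ b₂ t hb₁m hb₂m ht0 ht1).trans ?_
    have e1 := mul_le_mul_of_nonneg_left (min_le_left (A z₁ - b₁) (A z₂ - b₂))
      (by linarith : (0:ℝ) ≤ 1 - t)
    have e2 := mul_le_mul_of_nonneg_left (min_le_right (A z₁ - b₁) (A z₂ - b₂)) ht0
    have : (1-t)*b₁ + t*b₂ ≤ g t - δ := by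
      rw [hgdef]; dsimp only; nlinarith
    exact_mod_cast this
  set T : Set ℝ := {t | t ∈ Set.Icc (0:ℝ) 1 ∧ u (w t) < (g t : EReal)} with hTdef
  have h0T : (0:ℝ) ∈ T := by
    refine ⟨⟨le_refl 0, by norm_num⟩, ?_⟩
    rw [hw0, hg0]; exact h₁
  have hTbdd : BddAbove T := ⟨1, fun t ht => ht.1.2⟩
  have hTne : T.Nonempty := ⟨0, h0T⟩
  set a : ℝ := sSup T with hadef
  have h0a : 0 ≤ a := le_csSup hTbdd h0T
  have ha1 : a ≤ 1 := csSup_le hTne (fun t ht => ht.1.2)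
  have key1 : ∀ t, t ∈ T → u (w t) ≤ ((g t - δ : ℝ) : EReal) := by
    intro t ht
    have hvge : (g t : EReal) ≤ v (w t) := hnbw' t ht.2
    have hinf : u (w t) ⊓ v (w t) = u (w t) :=
      inf_eq_left.2 (le_of_lt (lt_of_lt_of_le ht.2 hvge))
    rw [← hinf]
    exact hchord t ht.1.1 ht.1.2
  have key2 : ∀ t, t ∈ Set.Icc (0:ℝ) 1 → t ∉ T → v (w t) ≤ ((g t - δ : ℝ) : EReal) := by
    intro t htI htT
    have huge : (g t : EReal) ≤ u (w t) := le_of_not_gt (fun hc => htT ⟨htI, hc⟩)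
    have hlt : u (w t) ⊓ v (w t) < (g t : EReal) :=
      lt_of_le_of_lt (hchord t htI.1 htI.2)
        (by exact_mod_cast (by linarith : g t - δ < g t))
    have hinf := inf_eq_right_of_lt hlt huge
    rw [← hinf]
    exact hchord t htI.1 htI.2
  have hwc : Continuous w := by fun_prop
  have hgc : Continuous g := by fun_prop
  by_cases haT : a ∈ T
  · have ha1' : a < 1 := by
      rcases lt_or_eq_of_le ha1 with h | h
      · exact h
      · exfalso
        have := haT.2
        rw [h, hw1, hg1] at this
        exact absurd this (not_lt.2 hu2)
    have hva : (g a : EReal) ≤ v (w a) := hnbw' a haT.2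
    have hlsc := hvl (w a) ((g a - δ/2 : ℝ) : EReal)
      (lt_of_lt_of_le (by exact_mod_cast (by linarith : g a - δ/2 < g a)) hva)
    have hev1 : ∀ᶠ t in 𝓝 a, ((g a - δ/2 : ℝ) : EReal) < v (w t) :=
      (hwc.tendsto a).eventually hlsc
    have hev2 : ∀ᶠ t in 𝓝 a, g t < g a + δ/2 :=
      (hgc.tendsto a).eventually
        (Filter.Tendsto.eventually_lt_const (by linarith) tendsto_id)
    have hmem : Set.Ioo a 1 ∈ 𝓝[>] a := Ioo_mem_nhdsGT_of_mem ⟨le_refl a, ha1'⟩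
    obtain ⟨t, ht', htm⟩ :=
      ((((hev1.and hev2).filter_mono nhdsWithin_le_nhds)).and
        (eventually_of_mem hmem (fun x hx => hx))).exists
    have htI : t ∈ Set.Icc (0:ℝ) 1 :=
      ⟨le_of_lt (lt_of_le_of_lt h0a htm.1), le_of_lt htm.2⟩
    have htT : t ∉ T := fun hT => absurd (le_csSup hTbdd hT) (not_le.2 htm.1)
    have hvle := key2 t htI htT
    have hcc : ((g a - δ/2 : ℝ) : EReal) < ((g t - δ : ℝ) : EReal) :=
      lt_of_lt_of_le ht'.1 hvle
    have : g a - δ/2 < g t - δ := by exact_mod_cast hcc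
    linarith [ht'.2]
  · have huge : (g a : EReal) ≤ u (w a) :=
      le_of_not_gt (fun hc => haT ⟨⟨h0a, ha1⟩, hc⟩)
    have hlsc := hul (w a) ((g a - δ/2 : ℝ) : EReal)
      (lt_of_lt_of_le (by exact_mod_cast (by linarith : g a - δ/2 < g a)) huge)
    have hev1 : ∀ᶠ t in 𝓝 a, ((g a - δ/2 : ℝ) : EReal) < u (w t) :=
      (hwc.tendsto a).eventually hlsc
    have hev2 : ∀ᶠ t in 𝓝 a, g t < g a + δ/2 :=
      (hgc.tendsto a).eventually
        (Filter.Tendsto.eventually_lt_const (by linarith) tendsto_id)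
    obtain ⟨ε, hε, hP⟩ := Metric.eventually_nhds_iff.1 (hev1.and hev2)
    obtain ⟨t, htT, htlt⟩ := exists_lt_of_lt_csSup hTne (by linarith : a - ε < a)
    have hta : t ≤ a := le_csSup hTbdd htT
    have hdist : dist t a < ε := by
      rw [Real.dist_eq, abs_lt]; constructor <;> linarith
    have hPt := hP hdist
    have hule := key1 t htT
    have hcc : ((g a - δ/2 : ℝ) : EReal) < ((g t - δ : ℝ) : EReal) :=
      lt_of_lt_of_le hPt.1 hule
    have : g a - δ/2 < g t - δ := by exact_mod_cast hcc
    linarith [hPt.2]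

/-- Lemma D: if `u ≥ A` everywhere, `m x ≤ a ≤ A x`, `a < v x`, then `v ≥ A` everywhere. -/
lemma lemD {u v : En n → EReal} (hvl : LowerSemicontinuous v)
    (hmin : ConvexFn (fun x => u x ⊓ v x))
    (A : En n → ℝ)
    (hAaff : ∀ (p q : En n) (t : ℝ), A ((1-t)•p + t•q) = (1-t) * A p + t * A q)
    (hu : ∀ z, (A z : EReal) ≤ u z)
    (x : En n) (a : ℝ) (hma : u x ⊓ v x ≤ (a : EReal)) (hac : a ≤ A x)
    (hav : (a : EReal) < v x)
    (z₂ : En n) (h₂ : v z₂ < (A z₂ : EReal)) : False := by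
  classical
  set w : ℝ → En n := fun t => (1-t)•x + t•z₂ with hwdef
  have hw0 : w 0 = x := by simp [hwdef]
  have hAw : ∀ t, A (w t) = (1-t) * A x + t * A z₂ := fun t => hAaff x z₂ t
  obtain ⟨b, hbm, hb⟩ := exists_real_le_lt (lt_of_le_of_lt inf_le_right h₂)
  obtain ⟨a', ha'1, ha'2⟩ := exists_real_btwn hav
  have hkey : ∀ t, 0 < t → t ≤ 1 → v (w t) ≤ (((1-t)*a + t*b : ℝ) : EReal) := by
    intro t ht0 ht1
    have hch := chord hmin x z₂ a b t hma hbm (le_of_lt ht0) ht1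
    have hlt : ((1-t)*a + t*b : ℝ) < A (w t) := by
      rw [hAw t]
      nlinarith
    have hinf := inf_eq_right_of_lt
      (lt_of_le_of_lt hch (by exact_mod_cast hlt)) (hu (w t))
    rw [← hinf]
    exact hch
  have hwc : Continuous w := by fun_prop
  have htd : Filter.Tendsto w (𝓝 0) (𝓝 x) := by
    have := hwc.tendsto 0
    rwa [hw0] at this
  have hev1 : ∀ᶠ t in 𝓝 (0:ℝ), ((a' : ℝ) : EReal) < v (w t) :=
    htd.eventually (hvl x (a' : EReal) ha'2)
  have hev2 : ∀ᶠ t in 𝓝 (0:ℝ), ((1-t)*a + t*b : ℝ) < a' := by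
    have hc : Continuous (fun t : ℝ => (1-t)*a + t*b) := by fun_prop
    have htd2 : Filter.Tendsto (fun t : ℝ => (1-t)*a + t*b) (𝓝 0) (𝓝 a) := by
      have h0 : (1-(0:ℝ))*a + 0*b = a := by ring
      have := hc.tendsto 0
      rwa [h0] at this
    exact Filter.Tendsto.eventually_lt_const ha'1 htd2
  have hmem : Set.Ioc (0:ℝ) 1 ∈ 𝓝[>] (0:ℝ) :=
    Ioc_mem_nhdsGT_of_mem ⟨le_refl 0, one_pos⟩
  obtain ⟨t, ht', htm⟩ :=
    (((hev1.and hev2).filter_mono nhdsWithin_le_nhds).and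
      (eventually_of_mem hmem (fun x hx => hx))).exists
  have hvb := hkey t htm.1 htm.2
  have hlt2 : (((1-t)*a + t*b : ℝ) : EReal) < ((a' : ℝ) : EReal) := by
    exact_mod_cast ht'.2
  exact absurd ht'.1 (not_lt.2 (le_of_lt (lt_of_le_of_lt hvb hlt2)))

lemma subdiff_inf_subset_left {u v : En n → EReal} (x : En n) (hle : u x ≤ v x) :
    subdiff (fun z => u z ⊓ v z) x ⊆ subdiff u x := by
  intro y hy
  simp only [subdiff, Set.mem_setOf_eq] at hy ⊢
  intro z
  have := hy z
  rw [inf_eq_left.2 hle] at this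
  exact this.trans inf_le_left

lemma subdiff_right_subset_sup {u v : En n → EReal} (x : En n) (hle : u x ≤ v x) :
    subdiff v x ⊆ subdiff (fun z => u z ⊔ v z) x := by
  intro y hy
  simp only [subdiff, Set.mem_setOf_eq] at hy ⊢
  intro z
  rw [sup_eq_right.2 hle]
  exact (hy z).trans le_sup_right

/-- P6: the subdifferential of the max is contained in the union. -/
lemma subdiff_sup_subset {u v : En n → EReal}
    (hul : LowerSemicontinuous u) (hvl : LowerSemicontinuous v)
    (hmin : ConvexFn (fun x => u x ⊓ v x)) (x : En n) :
    subdiff (fun z => u z ⊔ v z) x ⊆ subdiff u x ∪ subdiff v x := by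
  intro y hy
  simp only [subdiff, Set.mem_setOf_eq, Set.mem_union] at hy ⊢
  by_cases hbot : u x ⊔ v x = ⊥
  · left
    intro z
    have hub : u x = ⊥ := le_bot_iff.1 (le_sup_left.trans hbot.le)
    rw [hub, EReal.bot_add]
    exact bot_le
  · by_cases htop : u x ⊔ v x = ⊤
    · have hM : ∀ z, u z ⊔ v z = ⊤ := by
        intro z
        have := hy z
        rw [htop] at this
        rw [EReal.top_add_coe] at this
        exact top_le_iff.1 this
      have hdich : (∀ z, u z = ⊤) ∨ (∀ z, v z = ⊤) := by
        by_contra hc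
        push_neg at hc
        obtain ⟨⟨z₁, hz₁⟩, ⟨z₂, hz₂⟩⟩ := hc
        obtain ⟨c₁, hc₁⟩ := exists_real_gt _ hz₁
        obtain ⟨c₂, hc₂⟩ := exists_real_gt _ hz₂
        refine core hul hvl hmin (fun _ => max c₁ c₂) (fun p q t => by ring) ?_ z₁ z₂ ?_ ?_
        · intro z; rw [hM z]; exact le_top
        · exact lt_of_lt_of_le hc₁ (by exact_mod_cast le_max_left c₁ c₂)
        · exact lt_of_lt_of_le hc₂ (by exact_mod_cast le_max_right c₁ c₂)
      rcases hdich with h | h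
      · left; intro z; rw [h z]; exact le_top
      · right; intro z; rw [h z]; exact le_top
    · have hre : (((u x ⊔ v x).toReal : ℝ) : EReal) = u x ⊔ v x := EReal.coe_toReal htop hbot
      set cR : ℝ := (u x ⊔ v x).toReal with hcRdef
      have hA : ∀ z, ((cR + ⟪z - x, y⟫ : ℝ) : EReal) ≤ u z ⊔ v z := by
        intro z
        rw [EReal.coe_add, hre]
        exact hy z
      by_cases hcu : ∀ z, ((cR + ⟪z - x, y⟫ : ℝ) : EReal) ≤ u z
      · left
        intro z
        have h1 : u x ≤ ((cR : ℝ) : EReal) := by rw [hre]; exact le_sup_left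
        calc u x + (⟪z - x, y⟫ : EReal) ≤ ((cR : ℝ) : EReal) + (⟪z - x, y⟫ : EReal) :=
              add_le_add_left h1 _
          _ = ((cR + ⟪z - x, y⟫ : ℝ) : EReal) := by rw [EReal.coe_add]
          _ ≤ u z := hcu z
      · push_neg at hcu
        obtain ⟨z₁, h₁⟩ := hcu
        by_cases hcv : ∀ z, ((cR + ⟪z - x, y⟫ : ℝ) : EReal) ≤ v z
        · right
          intro z
          have h1 : v x ≤ ((cR : ℝ) : EReal) := by rw [hre]; exact le_sup_right
          calc v x + (⟪z - x, y⟫ : EReal) ≤ ((cR : ℝ) : EReal) + (⟪z - x, y⟫ : EReal) :=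
                add_le_add_left h1 _
            _ = ((cR + ⟪z - x, y⟫ : ℝ) : EReal) := by rw [EReal.coe_add]
            _ ≤ v z := hcv z
        · push_neg at hcv
          obtain ⟨z₂, h₂⟩ := hcv
          exact absurd (core hul hvl hmin (fun z => cR + ⟪z - x, y⟫)
            (fun p q t => aff_comb x y p q cR t) hA z₁ z₂ h₁ h₂) (fun h => h)

/-- P7': in the strict case the subdifferential of the max equals that of `v`. -/
lemma subdiff_sup_subset_right {u v : En n → EReal}
    (hul : LowerSemicontinuous u) (hvl : LowerSemicontinuous v)
    (hmin : ConvexFn (fun x => u x ⊓ v x)) (x : En n) (hlt : u x < v x) :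
    subdiff (fun z => u z ⊔ v z) x ⊆ subdiff v x := by
  intro y hy
  simp only [subdiff, Set.mem_setOf_eq] at hy ⊢
  have hMx : u x ⊔ v x = v x := sup_eq_right.2 (le_of_lt hlt)
  by_cases htop : v x = ⊤
  · intro z
    rw [htop, EReal.top_add_coe]
    rw [top_le_iff]
    by_contra hc
    have hvz : v z < (⊤ : EReal) := lt_top_iff_ne_top.2 hc
    have hux : u x < (⊤ : EReal) := by rw [← htop]; exact hlt
    obtain ⟨c₁, hc₁⟩ := exists_real_gt _ (lt_top_iff_ne_top.1 hux)
    obtain ⟨c₂, hc₂⟩ := exists_real_gt _ hc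
    refine core hul hvl hmin (fun _ => max c₁ c₂) (fun p q t => by ring) ?_ x z ?_ ?_
    · intro z'
      have := hy z'
      rw [hMx, htop, EReal.top_add_coe] at this
      exact le_trans le_top this
    · exact lt_of_lt_of_le hc₁ (by exact_mod_cast le_max_left c₁ c₂)
    · exact lt_of_lt_of_le hc₂ (by exact_mod_cast le_max_right c₁ c₂)
  · have hbot : v x ≠ ⊥ := by
      intro h
      rw [h] at hlt
      exact absurd hlt (by simp)
    have hre : (((v x).toReal : ℝ) : EReal) = v x := EReal.coe_toReal htop hbot
    set cR : ℝ := (v x).toReal with hcRdef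
    have hA : ∀ z, ((cR + ⟪z - x, y⟫ : ℝ) : EReal) ≤ u z ⊔ v z := by
      intro z
      rw [EReal.coe_add, hre]
      have := hy z
      rw [hMx] at this
      exact this
    by_cases hcu : ∃ z₁, u z₁ < ((cR + ⟪z₁ - x, y⟫ : ℝ) : EReal)
    · obtain ⟨z₁, h₁⟩ := hcu
      intro z
      rw [← hre, ← EReal.coe_add]
      by_contra hc
      exact core hul hvl hmin (fun w => cR + ⟪w - x, y⟫)
        (fun p q t => aff_comb x y p q cR t) hA z₁ z h₁ (not_le.1 hc)
    · push_neg at hcu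
      have hmx : u x ⊓ v x = u x := inf_eq_left.2 (le_of_lt hlt)
      have hux_lt : u x < ((cR : ℝ) : EReal) := by rw [hre]; exact hlt
      obtain ⟨aR, haR1, haR2⟩ := exists_real_le_lt hux_lt
      have hav : (aR : EReal) < v x := by
        rw [← hre]; exact_mod_cast haR2
      intro z
      rw [← hre, ← EReal.coe_add]
      by_contra hc
      refine lemD hvl hmin (fun w => cR + ⟪w - x, y⟫)
        (fun p q t => aff_comb x y p q cR t) hcu x aR ?_ ?_ hav z (not_le.1 hc)
      · rw [hmx]; exact haR1
      · show aR ≤ cR + ⟪x - x, y⟫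
        have : ⟪x - x, y⟫ = (0:ℝ) := by simp
        rw [this]; linarith

/-- P5: in the strict case the subdifferential of `u` is contained in that of the min. -/
lemma subdiff_subset_inf {u v : En n → EReal}
    (hvl : LowerSemicontinuous v)
    (hmin : ConvexFn (fun x => u x ⊓ v x)) (x : En n) (hlt : u x < v x) :
    subdiff u x ⊆ subdiff (fun z => u z ⊓ v z) x := by
  intro y hy
  simp only [subdiff, Set.mem_setOf_eq] at hy ⊢
  have hmx : u x ⊓ v x = u x := inf_eq_left.2 (le_of_lt hlt)
  intro z
  rw [hmx]
  by_cases hbot : u x = ⊥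
  · rw [hbot, EReal.bot_add]
    exact bot_le
  · have htop : u x ≠ ⊤ := ne_top_of_lt hlt
    have hre : (((u x).toReal : ℝ) : EReal) = u x := EReal.coe_toReal htop hbot
    set cR : ℝ := (u x).toReal with hcRdef
    have hcu : ∀ w, ((cR + ⟪w - x, y⟫ : ℝ) : EReal) ≤ u w := by
      intro w
      rw [EReal.coe_add, hre]
      exact hy w
    have hav : ((cR : ℝ) : EReal) < v x := by rw [hre]; exact hlt
    refine le_inf ?_ ?_
    · rw [← hre, ← EReal.coe_add]
      exact hcu z
    · rw [← hre, ← EReal.coe_add]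
      by_contra hc
      refine lemD hvl hmin (fun w => cR + ⟪w - x, y⟫)
        (fun p q t => aff_comb x y p q cR t) hcu x cR ?_ ?_ hav z (not_le.1 hc)
      · rw [hmx]; exact hre.ge
      · show cR ≤ cR + ⟪x - x, y⟫
        have : ⟪x - x, y⟫ = (0:ℝ) := by simp
        rw [this]; linarith

lemma main_aux {u v : En n → EReal}
    (hul : LowerSemicontinuous u) (hvl : LowerSemicontinuous v)
    (hmin : ConvexFn (fun x => u x ⊓ v x)) (x : En n) (hxle : u x ≤ v x) :
    (subdiff (fun z => u z ⊔ v z) x ∪ subdiff (fun z => u z ⊓ v z) x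
        = subdiff u x ∪ subdiff v x) ∧
    (subdiff (fun z => u z ⊔ v z) x ∩ subdiff (fun z => u z ⊓ v z) x
        = subdiff u x ∩ subdiff v x) := by
  rcases eq_or_lt_of_le hxle with heq | hlt
  · -- equality case
    have hMu : subdiff u x ⊆ subdiff (fun z => u z ⊔ v z) x := by
      intro y hy
      simp only [subdiff, Set.mem_setOf_eq] at hy ⊢
      intro z
      rw [← heq, sup_idem]
      exact (hy z).trans le_sup_left
    have hMv : subdiff v x ⊆ subdiff (fun z => u z ⊔ v z) x :=
      subdiff_right_subset_sup x hxle
    have hmuv : subdiff (fun z => u z ⊓ v z) x = subdiff u x ∩ subdiff v x := by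
      ext y
      simp only [subdiff, Set.mem_setOf_eq, Set.mem_inter_iff]
      constructor
      · intro hy
        constructor
        · intro z
          have := hy z
          rw [inf_eq_left.2 hxle] at this
          exact this.trans inf_le_left
        · intro z
          have := hy z
          rw [inf_eq_left.2 hxle, heq] at this
          exact this.trans inf_le_right
      · rintro ⟨h1, h2⟩ z
        rw [inf_eq_left.2 hxle]
        refine le_inf (h1 z) ?_
        rw [heq]
        exact h2 z
    have hM := subdiff_sup_subset hul hvl hmin x
    rw [hmuv]
    constructor
    · apply Set.Subset.antisymm
      · intro y hy
        rcases hy with hy | hy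
        · exact hM hy
        · exact Or.inl hy.1
      · intro y hy
        rcases hy with hy | hy
        · exact Or.inl (hMu hy)
        · exact Or.inl (hMv hy)
    · apply Set.Subset.antisymm
      · intro y hy
        exact hy.2
      · intro y hy
        exact ⟨hMu hy.1, hy⟩
  · have hMeq : subdiff (fun z => u z ⊔ v z) x = subdiff v x :=
      Set.Subset.antisymm (subdiff_sup_subset_right hul hvl hmin x hlt)
        (subdiff_right_subset_sup x hxle)
    have hmeq : subdiff (fun z => u z ⊓ v z) x = subdiff u x :=
      Set.Subset.antisymm (subdiff_inf_subset_left x hxle)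
        (subdiff_subset_inf hvl hmin x hlt)
    rw [hMeq, hmeq]
    exact ⟨Set.union_comm _ _, Set.inter_comm _ _⟩

end SubIE

theorem subdiff_inclusion_exclusion (n : ℕ) (u v : En n → EReal)
    (hu : ConvexFn u) (hv : ConvexFn v)
    (hul : LowerSemicontinuous u) (hvl : LowerSemicontinuous v)
    (hup : ∃ x, u x ≠ ⊤) (hvp : ∃ x, v x ≠ ⊤)
    (hmin : ConvexFn (fun x => u x ⊓ v x)) :
    ∀ x : En n,
      subdiff (fun z => u z ⊔ v z) x ∪ subdiff (fun z => u z ⊓ v z) x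
        = subdiff u x ∪ subdiff v x ∧
      subdiff (fun z => u z ⊔ v z) x ∩ subdiff (fun z => u z ⊓ v z) x
        = subdiff u x ∩ subdiff v x := by
  intro x
  rcases le_total (u x) (v x) with h | h
  · exact SubIE.main_aux hul hvl hmin x h
  · have e1 : (fun z => v z ⊔ u z) = (fun z => u z ⊔ v z) :=
      funext (fun z => sup_comm _ _)
    have e2 : (fun z => v z ⊓ u z) = (fun z => u z ⊓ v z) :=
      funext (fun z => inf_comm _ _)
    have hmin' : ConvexFn (fun x => v x ⊓ u x) := by rw [e2]; exact hmin
    have := SubIE.main_aux hvl hul hmin' x h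
    rw [e1, e2] at this
    constructor
    · rw [this.1, Set.union_comm]
    · rw [this.2, Set.inter_comm]
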